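/- Let α : ℕ → ℕ with α(n) ≥ 1 and let 0 < δ < 1 be such that n/(w·α(n)) > 1 for all sufficiently large n and all w ∈ (1−δ, 1+δ), and assume α(n)/n → 0. Then there exist a constant C and N ∈ ℕ such that for all n ≥ N and all w ∈ (1−δ, 1+δ), |h̃'''_{n,α}(w)| ≤ C·n/α(n), where h̃'''_{n,α} is the third derivative of h̃_{n,α}. -/

import Mathlib

open Finset Real Filter

namespace Stmt14


noncomputable def S0 (A : ℕ) (y : ℝ) : ℝ := ∑ j ∈ Icc 1 A, y ^ j
noncomputable def T (A : ℕ) (y : ℝ) : ℝ := ∑ j ∈ Icc 1 A, y ^ j / j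
noncomputable def S1 (A : ℕ) (y : ℝ) : ℝ := ∑ j ∈ Icc 1 A, (j : ℝ) * y ^ j
noncomputable def S2 (A : ℕ) (y : ℝ) : ℝ := ∑ j ∈ Icc 1 A, (j : ℝ) ^ 2 * y ^ j
noncomputable def S3 (A : ℕ) (y : ℝ) : ℝ := ∑ j ∈ Icc 1 A, (j : ℝ) ^ 3 * y ^ j
noncomputable def S4 (A : ℕ) (y : ℝ) : ℝ := ∑ j ∈ Icc 1 A, (j : ℝ) ^ 4 * y ^ j
noncomputable def dS0 (A : ℕ) (y : ℝ) : ℝ := ∑ j ∈ Icc 1 A, (j : ℝ) * y ^ (j - 1)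
noncomputable def dT (A : ℕ) (y : ℝ) : ℝ := ∑ j ∈ Icc 1 A, y ^ (j - 1)
noncomputable def dS1 (A : ℕ) (y : ℝ) : ℝ := ∑ j ∈ Icc 1 A, (j : ℝ) ^ 2 * y ^ (j - 1)
noncomputable def dS2 (A : ℕ) (y : ℝ) : ℝ := ∑ j ∈ Icc 1 A, (j : ℝ) ^ 3 * y ^ (j - 1)
noncomputable def dS3 (A : ℕ) (y : ℝ) : ℝ := ∑ j ∈ Icc 1 A, (j : ℝ) ^ 4 * y ^ (j - 1)

lemma hasDerivAt_S0 (A : ℕ) (y : ℝ) : HasDerivAt (S0 A) (dS0 A y) y :=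
  HasDerivAt.fun_sum fun j _ => hasDerivAt_pow j y

lemma hasDerivAt_T (A : ℕ) (y : ℝ) : HasDerivAt (T A) (dT A y) y := by
  apply HasDerivAt.fun_sum
  intro j hj
  have hj1 : 1 ≤ j := (mem_Icc.mp hj).1
  have hjne : (j : ℝ) ≠ 0 := Nat.cast_ne_zero.mpr (by omega)
  have := (hasDerivAt_pow j y).div_const (j : ℝ)
  simpa [mul_div_assoc, mul_div_cancel_left₀ _ hjne] using this

lemma hasDerivAt_S1 (A : ℕ) (y : ℝ) : HasDerivAt (S1 A) (dS1 A y) y := by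
  apply HasDerivAt.fun_sum
  intro j hj
  have := (hasDerivAt_pow j y).const_mul (j : ℝ)
  refine this.congr_deriv ?_
  ring

lemma hasDerivAt_S2 (A : ℕ) (y : ℝ) : HasDerivAt (S2 A) (dS2 A y) y := by
  apply HasDerivAt.fun_sum
  intro j hj
  have := (hasDerivAt_pow j y).const_mul ((j : ℝ) ^ 2)
  refine this.congr_deriv ?_
  ring

lemma hasDerivAt_S3 (A : ℕ) (y : ℝ) : HasDerivAt (S3 A) (dS3 A y) y := by
  apply HasDerivAt.fun_sum
  intro j hj
  have := (hasDerivAt_pow j y).const_mul ((j : ℝ) ^ 3)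
  refine this.congr_deriv ?_
  ring

lemma key_id (A : ℕ) (y : ℝ) (c : ℕ → ℝ) :
    y * ∑ j ∈ Icc 1 A, c j * y ^ (j - 1) = ∑ j ∈ Icc 1 A, c j * y ^ j := by
  rw [Finset.mul_sum]
  refine Finset.sum_congr rfl fun j hj => ?_
  have hj1 : 1 ≤ j := (mem_Icc.mp hj).1
  obtain ⟨k, rfl⟩ : ∃ k, j = k + 1 := ⟨j - 1, by omega⟩
  simp [pow_succ]; ring

lemma id_dS0 (A : ℕ) (y : ℝ) : y * dS0 A y = S1 A y := key_id A y _
lemma id_dT (A : ℕ) (y : ℝ) : y * dT A y = S0 A y := by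
  have := key_id A y (fun _ => 1); simpa [dT, S0] using this
lemma id_dS1 (A : ℕ) (y : ℝ) : y * dS1 A y = S2 A y := key_id A y _
lemma id_dS2 (A : ℕ) (y : ℝ) : y * dS2 A y = S3 A y := key_id A y _
lemma id_dS3 (A : ℕ) (y : ℝ) : y * dS3 A y = S4 A y := key_id A y _

lemma ne_icc (A : ℕ) (hA : 1 ≤ A) : (Icc 1 A).Nonempty := ⟨1, by simp [mem_Icc, hA]⟩

lemma S1_pos (A : ℕ) (hA : 1 ≤ A) {y : ℝ} (hy : 0 < y) : 0 < S1 A y :=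
  Finset.sum_pos (fun j hj => by
    have : 1 ≤ j := (mem_Icc.mp hj).1
    positivity) (ne_icc A hA)

lemma dS0_pos (A : ℕ) (hA : 1 ≤ A) {y : ℝ} (hy : 0 < y) : 0 < dS0 A y :=
  Finset.sum_pos (fun j hj => by
    have : 1 ≤ j := (mem_Icc.mp hj).1
    positivity) (ne_icc A hA)

lemma S0_lt_S0 (A : ℕ) (hA : 1 ≤ A) {a b : ℝ} (ha : 0 ≤ a) (hab : a < b) :
    S0 A a < S0 A b :=
  Finset.sum_lt_sum_of_nonempty (ne_icc A hA) fun j hj =>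
    pow_lt_pow_left₀ hab ha (by have := (mem_Icc.mp hj).1; omega)

-- upper bounds
lemma Sk_le (A k : ℕ) {y : ℝ} (hy : 0 ≤ y) :
    ∑ j ∈ Icc 1 A, (j : ℝ) ^ k * y ^ j ≤ (A : ℝ) ^ k * S0 A y := by
  rw [S0, Finset.mul_sum]
  refine Finset.sum_le_sum fun j hj => ?_
  have hjA : j ≤ A := (mem_Icc.mp hj).2
  have : (j : ℝ) ^ k ≤ (A : ℝ) ^ k := by
    apply pow_le_pow_left₀ (by positivity) (by exact_mod_cast hjA)
  exact mul_le_mul_of_nonneg_right this (by positivity)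

lemma S1_lower (A : ℕ) (hA : 1 ≤ A) {y : ℝ} (hy : 1 ≤ y) :
    (A : ℝ) * S0 A y ≤ 2 * S1 A y := by
  have hm : MonovaryOn (fun j : ℕ => (j : ℝ)) (fun j : ℕ => y ^ j) (Icc 1 A) := by
    intro i hi j hj hlt
    have hij : i ≤ j := by
      by_contra hc
      push_neg at hc
      exact absurd (pow_le_pow_right₀ hy hc.le) (not_le.mpr hlt)
    show (i : ℝ) ≤ (j : ℝ)
    exact_mod_cast hij
  have cheb := hm.sum_mul_sum_le_card_mul_sum
  have hcard : (#(Icc 1 A) : ℝ) = (A : ℝ) := by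
    rw [Nat.card_Icc]; simp
  have hnat : ∀ B : ℕ, B * B ≤ (∑ j ∈ Icc 1 B, j) * 2 := by
    intro B
    induction B with
    | zero => simp
    | succ k ih =>
      rw [Finset.sum_Icc_succ_top (by omega : 1 ≤ k + 1)]
      nlinarith [ih]
  have hsumj : (A : ℝ) * A ≤ (∑ j ∈ Icc 1 A, (j : ℝ)) * 2 := by
    have : ((A * A : ℕ) : ℝ) ≤ (((∑ j ∈ Icc 1 A, j) * 2 : ℕ) : ℝ) := by
      exact_mod_cast hnat A
    push_cast at this
    exact this
  have hS0 : 0 ≤ S0 A y := by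
    unfold S0
    positivity
  have hA' : (0 : ℝ) < A := by exact_mod_cast hA
  -- cheb : (∑ j) * S0 ≤ A * S1
  rw [hcard] at cheb
  have hS1 : 0 < S1 A y := S1_pos A hA (by linarith)
  unfold S0 S1 at *
  nlinarith [mul_le_mul_of_nonneg_right hsumj hS0, cheb]
lemma S0_le_S0 (A : ℕ) {a b : ℝ} (ha : 0 ≤ a) (hab : a ≤ b) :
    S0 A a ≤ S0 A b :=
  Finset.sum_le_sum fun j hj => pow_le_pow_left₀ ha hab j

variable {A n : ℕ} {X : ℝ → ℝ}

lemma X_cont (hA : 1 ≤ A) (hn : 1 ≤ n)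
    (hX : ∀ w : ℝ, 0 < w → 0 < X w ∧ S0 A (X w) = n / w)
    {w : ℝ} (hw : 0 < w) : ContinuousAt X w := by
  have hXw := hX w hw
  have hcont : Tendsto (fun w' : ℝ => (n : ℝ) / w') (nhds w) (nhds ((n : ℝ) / w)) :=
    (continuousAt_const.div continuousAt_id hw.ne')
  rw [ContinuousAt, tendsto_order]
  constructor
  · intro a ha
    by_cases ha0 : a ≤ 0
    · filter_upwards [eventually_gt_nhds hw] with w' hw'
      exact lt_of_le_of_lt ha0 (hX w' hw').1
    push_neg at ha0
    have hfa : S0 A a < (n : ℝ) / w := by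
      rw [← hXw.2]; exact S0_lt_S0 A hA ha0.le ha
    filter_upwards [eventually_gt_nhds hw, hcont.eventually_const_lt hfa] with w' hw' hlt
    by_contra hc
    push_neg at hc
    have : S0 A (X w') ≤ S0 A a := S0_le_S0 A (hX w' hw').1.le hc
    rw [(hX w' hw').2] at this
    linarith
  · intro b hb
    have hb0 : 0 < X w := hXw.1
    have hfb : (n : ℝ) / w < S0 A b := by
      rw [← hXw.2]; exact S0_lt_S0 A hA hb0.le hb
    filter_upwards [eventually_gt_nhds hw, hcont.eventually_lt_const hfb] with w' hw' hlt
    by_contra hc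
    push_neg at hc
    have : S0 A b ≤ S0 A (X w') := S0_le_S0 A (by linarith [hb0, hb] : (0:ℝ) ≤ b) hc
    rw [(hX w' hw').2] at this
    linarith

lemma X_deriv (hA : 1 ≤ A) (hn : 1 ≤ n)
    (hX : ∀ w : ℝ, 0 < w → 0 < X w ∧ S0 A (X w) = n / w)
    {w : ℝ} (hw : 0 < w) :
    HasDerivAt X (-((n : ℝ) * X w) / (w ^ 2 * S1 A (X w))) w := by
  have hXw := hX w hw
  have hn' : (0 : ℝ) < n := by exact_mod_cast hn
  have hS0 : S0 A (X w) = (n : ℝ) / w := hXw.2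
  have hS0ne : S0 A (X w) ≠ 0 := by rw [hS0]; positivity
  have hd : 0 < dS0 A (X w) := dS0_pos A hA hXw.1
  have hfd : HasDerivAt (fun y => (n : ℝ) / S0 A y)
      ((0 * S0 A (X w) - (n : ℝ) * dS0 A (X w)) / (S0 A (X w)) ^ 2) (X w) :=
    (hasDerivAt_const _ _).div (hasDerivAt_S0 A (X w)) hS0ne
  have hev : ∀ᶠ w' in nhds w, (fun y => (n : ℝ) / S0 A y) (X w') = w' := by
    filter_upwards [eventually_gt_nhds hw] with w' hw'
    show (n : ℝ) / S0 A (X w') = w'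
    rw [(hX w' hw').2]
    field_simp
  have hne : (0 * S0 A (X w) - (n : ℝ) * dS0 A (X w)) / (S0 A (X w)) ^ 2 ≠ 0 := by
    rw [div_ne_zero_iff]
    constructor
    · nlinarith
    · positivity
  have key := HasDerivAt.of_local_left_inverse (X_cont hA hn hX hw) hfd hne hev
  refine key.congr_deriv ?_
  rw [← id_dS0 A (X w), hS0]
  have hx0 : X w ≠ 0 := hXw.1.ne'
  field_simp
  ring
noncomputable def H1 (A n : ℕ) (X : ℝ → ℝ) (w : ℝ) : ℝ :=
  T A (X w) - 1 / (2 * w) + (n : ℝ) * S2 A (X w) / (2 * w ^ 2 * S1 A (X w) ^ 2)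

noncomputable def H2 (A n : ℕ) (X : ℝ → ℝ) (w : ℝ) : ℝ :=
  -((n : ℝ) ^ 2) / (w ^ 3 * S1 A (X w)) + 1 / (2 * w ^ 2)
  + (n : ℝ) / 2 * (-((n : ℝ) * S3 A (X w)) / (w ^ 4 * S1 A (X w) ^ 3)
      - 2 * S2 A (X w) / (w ^ 3 * S1 A (X w) ^ 2)
      + 2 * (n : ℝ) * S2 A (X w) ^ 2 / (w ^ 4 * S1 A (X w) ^ 4))

noncomputable def H3 (A n : ℕ) (X : ℝ → ℝ) (w : ℝ) : ℝ :=
  3 * (n : ℝ) ^ 2 / (w ^ 4 * S1 A (X w)) - (n : ℝ) ^ 3 * S2 A (X w) / (w ^ 5 * S1 A (X w) ^ 3)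
  - 1 / w ^ 3
  + (n : ℝ) / 2 * ((n : ℝ) ^ 2 * S4 A (X w) / (w ^ 6 * S1 A (X w) ^ 4)
      + 6 * (n : ℝ) * S3 A (X w) / (w ^ 5 * S1 A (X w) ^ 3)
      + 6 * S2 A (X w) / (w ^ 4 * S1 A (X w) ^ 2)
      - 7 * (n : ℝ) ^ 2 * S2 A (X w) * S3 A (X w) / (w ^ 6 * S1 A (X w) ^ 5)
      - 12 * (n : ℝ) * S2 A (X w) ^ 2 / (w ^ 5 * S1 A (X w) ^ 4)
      + 8 * (n : ℝ) ^ 2 * S2 A (X w) ^ 3 / (w ^ 6 * S1 A (X w) ^ 6))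

lemma L1 {A n : ℕ} {X : ℝ → ℝ} (hA : 1 ≤ A) (hn : 1 ≤ n)
    (hX : ∀ w : ℝ, 0 < w → 0 < X w ∧ S0 A (X w) = n / w)
    {h : ℝ → ℝ}
    (hh : ∀ w : ℝ, 0 < w → h w = w * T A (X w) - (n : ℝ) * Real.log (X w)
      - 1 / 2 * Real.log (2 * π * w * S1 A (X w)))
    {w : ℝ} (hw : 0 < w) : HasDerivAt h (H1 A n X w) w := by
  have hXw := hX w hw
  have hx0 : X w ≠ 0 := hXw.1.ne'
  have hS1 : 0 < S1 A (X w) := S1_pos A hA hXw.1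
  have hn' : (0 : ℝ) < n := by exact_mod_cast hn
  set D1 : ℝ := -((n : ℝ) * X w) / (w ^ 2 * S1 A (X w)) with hD1
  have hdX : HasDerivAt X D1 w := X_deriv hA hn hX hw
  have h1 : HasDerivAt (fun w' => T A (X w')) (dT A (X w) * D1) w :=
    (hasDerivAt_T A (X w)).comp w hdX
  have h2 : HasDerivAt (fun w' => w' * T A (X w')) (1 * T A (X w) + w * (dT A (X w) * D1)) w :=
    (hasDerivAt_id w).mul h1
  have h3 : HasDerivAt (fun w' => Real.log (X w')) ((X w)⁻¹ * D1) w :=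
    (Real.hasDerivAt_log hx0).comp w hdX
  have h4 : HasDerivAt (fun w' => S1 A (X w')) (dS1 A (X w) * D1) w :=
    (hasDerivAt_S1 A (X w)).comp w hdX
  have h5 : HasDerivAt (fun w' => 2 * π * w' * S1 A (X w'))
      (2 * π * 1 * S1 A (X w) + 2 * π * w * (dS1 A (X w) * D1)) w :=
    (((hasDerivAt_id w).const_mul (2 * π))).mul h4
  have hpos : 0 < 2 * π * w * S1 A (X w) := by positivity
  have h6 : HasDerivAt (fun w' => Real.log (2 * π * w' * S1 A (X w')))
      ((2 * π * w * S1 A (X w))⁻¹ * (2 * π * 1 * S1 A (X w) + 2 * π * w * (dS1 A (X w) * D1))) w :=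
    by have := (Real.hasDerivAt_log hpos.ne').comp w h5; exact this
  have hRHS : HasDerivAt (fun w' => w' * T A (X w') - (n : ℝ) * Real.log (X w')
      - 1 / 2 * Real.log (2 * π * w' * S1 A (X w')))
      (1 * T A (X w) + w * (dT A (X w) * D1) - (n : ℝ) * ((X w)⁻¹ * D1)
        - 1 / 2 * ((2 * π * w * S1 A (X w))⁻¹ *
          (2 * π * 1 * S1 A (X w) + 2 * π * w * (dS1 A (X w) * D1)))) w :=
    (h2.sub (h3.const_mul (n : ℝ))).sub (h6.const_mul (1 / 2))
  have heq : h =ᶠ[nhds w] (fun w' => w' * T A (X w') - (n : ℝ) * Real.log (X w')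
      - 1 / 2 * Real.log (2 * π * w' * S1 A (X w'))) := by
    filter_upwards [eventually_gt_nhds hw] with w' hw'
    exact hh w' hw'
  have key := hRHS.congr_of_eventuallyEq heq
  refine key.congr_deriv ?_
  have edT : dT A (X w) = ((n : ℝ) / w) / X w := by
    rw [eq_div_iff hx0, mul_comm, id_dT, hXw.2]
  have edS1 : dS1 A (X w) = S2 A (X w) / X w := by
    rw [eq_div_iff hx0, mul_comm, id_dS1]
  rw [hD1, edT, edS1, H1]
  have hπ : π ≠ 0 := Real.pi_ne_zero
  field_simp
  ring

lemma L2 {A n : ℕ} {X : ℝ → ℝ} (hA : 1 ≤ A) (hn : 1 ≤ n)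
    (hX : ∀ w : ℝ, 0 < w → 0 < X w ∧ S0 A (X w) = n / w)
    {w : ℝ} (hw : 0 < w) : HasDerivAt (H1 A n X) (H2 A n X w) w := by
  have hXw := hX w hw
  have hx0 : X w ≠ 0 := hXw.1.ne'
  have hS1 : 0 < S1 A (X w) := S1_pos A hA hXw.1
  have hn' : (0 : ℝ) < n := by exact_mod_cast hn
  set D1 : ℝ := -((n : ℝ) * X w) / (w ^ 2 * S1 A (X w)) with hD1
  have hdX : HasDerivAt X D1 w := X_deriv hA hn hX hw
  have hTX : HasDerivAt (fun w' => T A (X w')) (dT A (X w) * D1) w :=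
    (hasDerivAt_T A (X w)).comp w hdX
  have hS1X : HasDerivAt (fun w' => S1 A (X w')) (dS1 A (X w) * D1) w :=
    (hasDerivAt_S1 A (X w)).comp w hdX
  have hS2X : HasDerivAt (fun w' => S2 A (X w')) (dS2 A (X w) * D1) w :=
    (hasDerivAt_S2 A (X w)).comp w hdX
  have t2 : HasDerivAt (fun w' => 1 / (2 * w'))
      ((0 * (2 * w) - 1 * (2 * 1)) / (2 * w) ^ 2) w :=
    (hasDerivAt_const w 1).div ((hasDerivAt_id w).const_mul 2) (by positivity)
  have hnum : HasDerivAt (fun w' => (n : ℝ) * S2 A (X w'))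
      ((n : ℝ) * (dS2 A (X w) * D1)) w := hS2X.const_mul _
  have hS1sq : HasDerivAt (fun w' => S1 A (X w') ^ 2)
      (2 * S1 A (X w) ^ 1 * (dS1 A (X w) * D1)) w := hS1X.pow 2
  have hwsq : HasDerivAt (fun w' => 2 * w' ^ 2) (2 * (2 * w ^ 1)) w :=
    (hasDerivAt_pow 2 w).const_mul 2
  have hden : HasDerivAt (fun w' => 2 * w' ^ 2 * S1 A (X w') ^ 2)
      (2 * (2 * w ^ 1) * S1 A (X w) ^ 2 + 2 * w ^ 2 * (2 * S1 A (X w) ^ 1 * (dS1 A (X w) * D1))) w :=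
    hwsq.mul hS1sq
  have hdenne : 2 * w ^ 2 * S1 A (X w) ^ 2 ≠ 0 := by positivity
  have t3 : HasDerivAt (fun w' => (n : ℝ) * S2 A (X w') / (2 * w' ^ 2 * S1 A (X w') ^ 2))
      (((n : ℝ) * (dS2 A (X w) * D1) * (2 * w ^ 2 * S1 A (X w) ^ 2)
        - (n : ℝ) * S2 A (X w) * (2 * (2 * w ^ 1) * S1 A (X w) ^ 2
            + 2 * w ^ 2 * (2 * S1 A (X w) ^ 1 * (dS1 A (X w) * D1))))
        / (2 * w ^ 2 * S1 A (X w) ^ 2) ^ 2) w := hnum.div hden hdenne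
  have hRHS := (hTX.sub t2).add t3
  have : HasDerivAt (H1 A n X)
      (dT A (X w) * D1 - (0 * (2 * w) - 1 * (2 * 1)) / (2 * w) ^ 2
        + ((n : ℝ) * (dS2 A (X w) * D1) * (2 * w ^ 2 * S1 A (X w) ^ 2)
        - (n : ℝ) * S2 A (X w) * (2 * (2 * w ^ 1) * S1 A (X w) ^ 2
            + 2 * w ^ 2 * (2 * S1 A (X w) ^ 1 * (dS1 A (X w) * D1))))
        / (2 * w ^ 2 * S1 A (X w) ^ 2) ^ 2) w := hRHS
  convert this using 1
  have edT : dT A (X w) = ((n : ℝ) / w) / X w := by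
    rw [eq_div_iff hx0, mul_comm, id_dT, hXw.2]
  have edS1 : dS1 A (X w) = S2 A (X w) / X w := by
    rw [eq_div_iff hx0, mul_comm, id_dS1]
  have edS2 : dS2 A (X w) = S3 A (X w) / X w := by
    rw [eq_div_iff hx0, mul_comm, id_dS2]
  rw [hD1, edT, edS1, edS2, H2]
  field_simp
  ring

lemma L3 {A n : ℕ} {X : ℝ → ℝ} (hA : 1 ≤ A) (hn : 1 ≤ n)
    (hX : ∀ w : ℝ, 0 < w → 0 < X w ∧ S0 A (X w) = n / w)
    {w : ℝ} (hw : 0 < w) : HasDerivAt (H2 A n X) (H3 A n X w) w := by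
  have hXw := hX w hw
  have hx0 : X w ≠ 0 := hXw.1.ne'
  have hS1 : 0 < S1 A (X w) := S1_pos A hA hXw.1
  have hn' : (0 : ℝ) < n := by exact_mod_cast hn
  set D1 : ℝ := -((n : ℝ) * X w) / (w ^ 2 * S1 A (X w)) with hD1
  have hdX : HasDerivAt X D1 w := X_deriv hA hn hX hw
  have hS1X : HasDerivAt (fun w' => S1 A (X w')) (dS1 A (X w) * D1) w :=
    (hasDerivAt_S1 A (X w)).comp w hdX
  have hS2X : HasDerivAt (fun w' => S2 A (X w')) (dS2 A (X w) * D1) w :=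
    (hasDerivAt_S2 A (X w)).comp w hdX
  have hS3X : HasDerivAt (fun w' => S3 A (X w')) (dS3 A (X w) * D1) w :=
    (hasDerivAt_S3 A (X w)).comp w hdX
  -- t1 : -(n^2) / (w^3 * S1)
  have hden1 : HasDerivAt (fun w' => w' ^ 3 * S1 A (X w'))
      (3 * w ^ 2 * S1 A (X w) + w ^ 3 * (dS1 A (X w) * D1)) w :=
    (hasDerivAt_pow 3 w).mul hS1X
  have hden1ne : w ^ 3 * S1 A (X w) ≠ 0 := by positivity
  have t1 : HasDerivAt (fun w' => -((n : ℝ) ^ 2) / (w' ^ 3 * S1 A (X w')))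
      ((0 * (w ^ 3 * S1 A (X w)) - -((n : ℝ) ^ 2) * (3 * w ^ 2 * S1 A (X w)
          + w ^ 3 * (dS1 A (X w) * D1))) / (w ^ 3 * S1 A (X w)) ^ 2) w := by
    have := (hasDerivAt_const w (-((n : ℝ) ^ 2))).div hden1 hden1ne
    exact this.congr_deriv (by norm_num)
  -- t2 : 1 / (2 * w^2)
  have t2 : HasDerivAt (fun w' => 1 / (2 * w' ^ 2))
      ((0 * (2 * w ^ 2) - 1 * (2 * (2 * w ^ 1))) / (2 * w ^ 2) ^ 2) w :=
    (hasDerivAt_const w 1).div ((hasDerivAt_pow 2 w).const_mul 2) (by positivity)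
  -- t3a : -(n * S3) / (w^4 * S1^3)
  have hnum3a : HasDerivAt (fun w' => -((n : ℝ) * S3 A (X w')))
      (-((n : ℝ) * (dS3 A (X w) * D1))) w := (hS3X.const_mul _).neg
  have hden3a : HasDerivAt (fun w' => w' ^ 4 * S1 A (X w') ^ 3)
      (4 * w ^ 3 * S1 A (X w) ^ 3 + w ^ 4 * (3 * S1 A (X w) ^ 2 * (dS1 A (X w) * D1))) w := by
    have := (hasDerivAt_pow 4 w).mul (hS1X.pow 3)
    exact this.congr_deriv (by norm_num)
  have hden3ane : w ^ 4 * S1 A (X w) ^ 3 ≠ 0 := by positivity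
  have t3a : HasDerivAt (fun w' => -((n : ℝ) * S3 A (X w')) / (w' ^ 4 * S1 A (X w') ^ 3))
      ((-((n : ℝ) * (dS3 A (X w) * D1)) * (w ^ 4 * S1 A (X w) ^ 3)
        - -((n : ℝ) * S3 A (X w)) * (4 * w ^ 3 * S1 A (X w) ^ 3
            + w ^ 4 * (3 * S1 A (X w) ^ 2 * (dS1 A (X w) * D1))))
        / (w ^ 4 * S1 A (X w) ^ 3) ^ 2) w := hnum3a.div hden3a hden3ane
  -- t3b : 2 * S2 / (w^3 * S1^2)
  have hnum3b : HasDerivAt (fun w' => 2 * S2 A (X w')) (2 * (dS2 A (X w) * D1)) w :=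
    hS2X.const_mul _
  have hden3b : HasDerivAt (fun w' => w' ^ 3 * S1 A (X w') ^ 2)
      (3 * w ^ 2 * S1 A (X w) ^ 2 + w ^ 3 * (2 * S1 A (X w) ^ 1 * (dS1 A (X w) * D1))) w := by
    have := (hasDerivAt_pow 3 w).mul (hS1X.pow 2)
    exact this.congr_deriv (by norm_num)
  have hden3bne : w ^ 3 * S1 A (X w) ^ 2 ≠ 0 := by positivity
  have t3b : HasDerivAt (fun w' => 2 * S2 A (X w') / (w' ^ 3 * S1 A (X w') ^ 2))
      ((2 * (dS2 A (X w) * D1) * (w ^ 3 * S1 A (X w) ^ 2)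
        - 2 * S2 A (X w) * (3 * w ^ 2 * S1 A (X w) ^ 2
            + w ^ 3 * (2 * S1 A (X w) ^ 1 * (dS1 A (X w) * D1))))
        / (w ^ 3 * S1 A (X w) ^ 2) ^ 2) w := hnum3b.div hden3b hden3bne
  -- t3c : 2 * n * S2^2 / (w^4 * S1^4)
  have hnum3c : HasDerivAt (fun w' => 2 * (n : ℝ) * S2 A (X w') ^ 2)
      (2 * (n : ℝ) * (2 * S2 A (X w) ^ 1 * (dS2 A (X w) * D1))) w :=
    (hS2X.pow 2).const_mul _
  have hden3c : HasDerivAt (fun w' => w' ^ 4 * S1 A (X w') ^ 4)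
      (4 * w ^ 3 * S1 A (X w) ^ 4 + w ^ 4 * (4 * S1 A (X w) ^ 3 * (dS1 A (X w) * D1))) w := by
    have := (hasDerivAt_pow 4 w).mul (hS1X.pow 4)
    exact this.congr_deriv (by norm_num)
  have hden3cne : w ^ 4 * S1 A (X w) ^ 4 ≠ 0 := by positivity
  have t3c : HasDerivAt (fun w' => 2 * (n : ℝ) * S2 A (X w') ^ 2 / (w' ^ 4 * S1 A (X w') ^ 4))
      ((2 * (n : ℝ) * (2 * S2 A (X w) ^ 1 * (dS2 A (X w) * D1)) * (w ^ 4 * S1 A (X w) ^ 4)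
        - 2 * (n : ℝ) * S2 A (X w) ^ 2 * (4 * w ^ 3 * S1 A (X w) ^ 4
            + w ^ 4 * (4 * S1 A (X w) ^ 3 * (dS1 A (X w) * D1))))
        / (w ^ 4 * S1 A (X w) ^ 4) ^ 2) w := hnum3c.div hden3c hden3cne
  have t3 := ((t3a.sub t3b).add t3c).const_mul ((n : ℝ) / 2)
  have hRHS := (t1.add t2).add t3
  have key : HasDerivAt (H2 A n X) _ w := hRHS
  convert key using 1
  have edS1 : dS1 A (X w) = S2 A (X w) / X w := by
    rw [eq_div_iff hx0, mul_comm, id_dS1]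
  have edS2 : dS2 A (X w) = S3 A (X w) / X w := by
    rw [eq_div_iff hx0, mul_comm, id_dS2]
  have edS3 : dS3 A (X w) = S4 A (X w) / X w := by
    rw [eq_div_iff hx0, mul_comm, id_dS3]
  rw [hD1, edS1, edS2, edS3, H3]
  field_simp
  ring
lemma Sk_nonneg (A k : ℕ) {y : ℝ} (hy : 0 ≤ y) :
    0 ≤ ∑ j ∈ Icc 1 A, (j : ℝ) ^ k * y ^ j :=
  Finset.sum_nonneg fun j _ => by positivity

lemma X_gt_one {A n : ℕ} {X : ℝ → ℝ} (hA : 1 ≤ A)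
    (hX : ∀ w : ℝ, 0 < w → 0 < X w ∧ S0 A (X w) = n / w)
    {w : ℝ} (hw : 0 < w) (hbig : w * (A : ℝ) < n) : 1 < X w := by
  have hXw := hX w hw
  by_contra hc
  push_neg at hc
  have h1 : S0 A (X w) ≤ (A : ℝ) := by
    have : S0 A (X w) ≤ ∑ _j ∈ Icc 1 A, (1 : ℝ) :=
      Finset.sum_le_sum fun j _ => pow_le_one₀ hXw.1.le hc
    simpa [Nat.card_Icc] using this
  rw [hXw.2, div_le_iff₀ hw] at h1
  nlinarith

set_option maxHeartbeats 2000000 in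
lemma Lbound {A n : ℕ} {X : ℝ → ℝ} (hA : 1 ≤ A) (hn : 1 ≤ n)
    (hX : ∀ w : ℝ, 0 < w → 0 < X w ∧ S0 A (X w) = n / w)
    {w : ℝ} (hw : 0 < w) (hw2 : w < 2) (hbig : w * (A : ℝ) < n) :
    |H3 A n X w| ≤ 537 * ((n : ℝ) / ((A : ℝ) * w ^ 4)) := by
  have hXw := hX w hw
  set m : ℝ := (n : ℝ) with hm
  set a : ℝ := (A : ℝ) with ha
  have ha1 : (1 : ℝ) ≤ a := by rw [ha]; exact_mod_cast hA
  have hm1 : (1 : ℝ) ≤ m := by rw [hm]; exact_mod_cast hn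
  have hx1 : 1 < X w := X_gt_one hA hX hw hbig
  have hx0 : 0 < X w := hXw.1
  set s1 : ℝ := S1 A (X w) with hs1
  set s2 : ℝ := S2 A (X w) with hs2d
  set s3 : ℝ := S3 A (X w) with hs3d
  set s4 : ℝ := S4 A (X w) with hs4d
  have hs1p : 0 < s1 := S1_pos A hA hx0
  have hs1l : a * m / (2 * w) ≤ s1 := by
    have := S1_lower A hA hx1.le
    rw [hXw.2] at this
    rw [div_le_iff₀ (by positivity)]
    calc a * m = a * (m / w) * w := by field_simp
    _ ≤ 2 * s1 * w := by
      apply mul_le_mul_of_nonneg_right _ hw.le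
      exact this
    _ = s1 * (2 * w) := by ring
  have hs2 : s2 ≤ a ^ 2 * (m / w) := by
    have := Sk_le A 2 hx0.le; rw [hXw.2] at this; exact this
  have hs3 : s3 ≤ a ^ 3 * (m / w) := by
    have := Sk_le A 3 hx0.le; rw [hXw.2] at this; exact this
  have hs4 : s4 ≤ a ^ 4 * (m / w) := by
    have := Sk_le A 4 hx0.le; rw [hXw.2] at this; exact this
  have hs2n : 0 ≤ s2 := Sk_nonneg A 2 hx0.le
  have hs3n : 0 ≤ s3 := Sk_nonneg A 3 hx0.le
  have hs4n : 0 ≤ s4 := Sk_nonneg A 4 hx0.le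
  set M : ℝ := m / (a * w ^ 4) with hM
  have hMpos : 0 < M := by positivity
  have hcube : 1 / w ^ 3 ≤ M := by
    rw [hM, div_le_div_iff₀ (by positivity) (by positivity)]
    nlinarith [mul_lt_mul_of_pos_right hbig (pow_pos hw 3)]
  -- term bounds
  have bt1 : 3 * m ^ 2 / (w ^ 4 * s1) ≤ 12 * M := by
    calc 3 * m ^ 2 / (w ^ 4 * s1) ≤ 3 * m ^ 2 / (w ^ 4 * (a * m / (2 * w))) := by
          gcongr
      _ = (6 * w) * M := by rw [hM]; field_simp; ring
      _ ≤ 12 * M := by nlinarith [hMpos]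
  have bt2 : m ^ 3 * s2 / (w ^ 5 * s1 ^ 3) ≤ 16 * M := by
    calc m ^ 3 * s2 / (w ^ 5 * s1 ^ 3)
        ≤ m ^ 3 * (a ^ 2 * (m / w)) / (w ^ 5 * (a * m / (2 * w)) ^ 3) := by
          gcongr
      _ = (8 * w) * M := by rw [hM]; field_simp; ring
      _ ≤ 16 * M := by nlinarith [hMpos]
  have bp4 : m / 2 * (m ^ 2 * s4 / (w ^ 6 * s1 ^ 4)) ≤ 8 * M := by
    calc m / 2 * (m ^ 2 * s4 / (w ^ 6 * s1 ^ 4))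
        ≤ m / 2 * (m ^ 2 * (a ^ 4 * (m / w)) / (w ^ 6 * (a * m / (2 * w)) ^ 4)) := by
          gcongr
      _ = 8 / w ^ 3 := by field_simp; ring
      _ = 8 * (1 / w ^ 3) := by ring
      _ ≤ 8 * M := by linarith [hcube]
  have bp5 : m / 2 * (6 * m * s3 / (w ^ 5 * s1 ^ 3)) ≤ 24 * M := by
    calc m / 2 * (6 * m * s3 / (w ^ 5 * s1 ^ 3))
        ≤ m / 2 * (6 * m * (a ^ 3 * (m / w)) / (w ^ 5 * (a * m / (2 * w)) ^ 3)) := by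
          gcongr
      _ = 24 / w ^ 3 := by field_simp; ring
      _ = 24 * (1 / w ^ 3) := by ring
      _ ≤ 24 * M := by linarith [hcube]
  have bp6 : m / 2 * (6 * s2 / (w ^ 4 * s1 ^ 2)) ≤ 12 * M := by
    calc m / 2 * (6 * s2 / (w ^ 4 * s1 ^ 2))
        ≤ m / 2 * (6 * (a ^ 2 * (m / w)) / (w ^ 4 * (a * m / (2 * w)) ^ 2)) := by
          gcongr
      _ = 12 / w ^ 3 := by field_simp; ring
      _ = 12 * (1 / w ^ 3) := by ring
      _ ≤ 12 * M := by linarith [hcube]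
  have bp7 : m / 2 * (7 * m ^ 2 * s2 * s3 / (w ^ 6 * s1 ^ 5)) ≤ 112 * M := by
    calc m / 2 * (7 * m ^ 2 * s2 * s3 / (w ^ 6 * s1 ^ 5))
        ≤ m / 2 * (7 * m ^ 2 * (a ^ 2 * (m / w)) * (a ^ 3 * (m / w))
            / (w ^ 6 * (a * m / (2 * w)) ^ 5)) := by
          gcongr
      _ = 112 / w ^ 3 := by field_simp; ring
      _ = 112 * (1 / w ^ 3) := by ring
      _ ≤ 112 * M := by linarith [hcube]
  have bp8 : m / 2 * (12 * m * s2 ^ 2 / (w ^ 5 * s1 ^ 4)) ≤ 96 * M := by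
    calc m / 2 * (12 * m * s2 ^ 2 / (w ^ 5 * s1 ^ 4))
        ≤ m / 2 * (12 * m * (a ^ 2 * (m / w)) ^ 2 / (w ^ 5 * (a * m / (2 * w)) ^ 4)) := by
          gcongr
      _ = 96 / w ^ 3 := by field_simp; ring
      _ = 96 * (1 / w ^ 3) := by ring
      _ ≤ 96 * M := by linarith [hcube]
  have bp9 : m / 2 * (8 * m ^ 2 * s2 ^ 3 / (w ^ 6 * s1 ^ 6)) ≤ 256 * M := by
    calc m / 2 * (8 * m ^ 2 * s2 ^ 3 / (w ^ 6 * s1 ^ 6))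
        ≤ m / 2 * (8 * m ^ 2 * (a ^ 2 * (m / w)) ^ 3 / (w ^ 6 * (a * m / (2 * w)) ^ 6)) := by
          gcongr
      _ = 256 / w ^ 3 := by field_simp; ring
      _ = 256 * (1 / w ^ 3) := by ring
      _ ≤ 256 * M := by linarith [hcube]
  -- nonnegativity of each term
  have nt1 : 0 ≤ 3 * m ^ 2 / (w ^ 4 * s1) := by positivity
  have nt2 : 0 ≤ m ^ 3 * s2 / (w ^ 5 * s1 ^ 3) := by positivity
  have nt3 : 0 ≤ 1 / w ^ 3 := by positivity
  have np4 : 0 ≤ m / 2 * (m ^ 2 * s4 / (w ^ 6 * s1 ^ 4)) := by positivity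
  have np5 : 0 ≤ m / 2 * (6 * m * s3 / (w ^ 5 * s1 ^ 3)) := by positivity
  have np6 : 0 ≤ m / 2 * (6 * s2 / (w ^ 4 * s1 ^ 2)) := by positivity
  have np7 : 0 ≤ m / 2 * (7 * m ^ 2 * s2 * s3 / (w ^ 6 * s1 ^ 5)) := by positivity
  have np8 : 0 ≤ m / 2 * (12 * m * s2 ^ 2 / (w ^ 5 * s1 ^ 4)) := by positivity
  have np9 : 0 ≤ m / 2 * (8 * m ^ 2 * s2 ^ 3 / (w ^ 6 * s1 ^ 6)) := by positivity
  have hEq : H3 A n X w =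
      3 * m ^ 2 / (w ^ 4 * s1) - m ^ 3 * s2 / (w ^ 5 * s1 ^ 3) - 1 / w ^ 3
      + m / 2 * (m ^ 2 * s4 / (w ^ 6 * s1 ^ 4))
      + m / 2 * (6 * m * s3 / (w ^ 5 * s1 ^ 3))
      + m / 2 * (6 * s2 / (w ^ 4 * s1 ^ 2))
      - m / 2 * (7 * m ^ 2 * s2 * s3 / (w ^ 6 * s1 ^ 5))
      - m / 2 * (12 * m * s2 ^ 2 / (w ^ 5 * s1 ^ 4))
      + m / 2 * (8 * m ^ 2 * s2 ^ 3 / (w ^ 6 * s1 ^ 6)) := by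
    rw [H3, ← hs1, ← hs2d, ← hs3d, ← hs4d, ← hm]
    ring
  rw [abs_le, hEq]
  constructor
  · linarith [bt2, nt1, np4, np5, np6, bp7, bp8, np9, hcube, hMpos]
  · linarith [bt1, nt2, nt3, bp4, bp5, bp6, np7, np8, bp9, hMpos, hcube]
lemma iter3_bound {A n : ℕ} {X : ℝ → ℝ} (hA : 1 ≤ A) (hn : 1 ≤ n)
    (hX : ∀ w : ℝ, 0 < w → 0 < X w ∧ S0 A (X w) = n / w)
    {h : ℝ → ℝ}
    (hh : ∀ w : ℝ, 0 < w → h w = w * T A (X w) - (n : ℝ) * Real.log (X w)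
      - 1 / 2 * Real.log (2 * π * w * S1 A (X w)))
    {w : ℝ} (hw : 0 < w) (hw2 : w < 2) (hbig : w * (A : ℝ) < n) :
    |iteratedDeriv 3 h w| ≤ 537 * ((n : ℝ) / ((A : ℝ) * w ^ 4)) := by
  have e1 : ∀ u : ℝ, 0 < u → deriv h u = H1 A n X u :=
    fun u hu => (L1 hA hn hX hh hu).deriv
  have e2 : ∀ u : ℝ, 0 < u → deriv (deriv h) u = H2 A n X u := by
    intro u hu
    have hev : deriv h =ᶠ[nhds u] H1 A n X := by
      filter_upwards [eventually_gt_nhds hu] with v hv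
      exact e1 v hv
    rw [hev.deriv_eq]
    exact (L2 hA hn hX hu).deriv
  have e3 : deriv (deriv (deriv h)) w = H3 A n X w := by
    have hev : deriv (deriv h) =ᶠ[nhds w] H2 A n X := by
      filter_upwards [eventually_gt_nhds hw] with v hv
      exact e2 v hv
    rw [hev.deriv_eq]
    exact (L3 hA hn hX hw).deriv
  have hu3 : iteratedDeriv 3 h = deriv (deriv (deriv h)) := by
    rw [show (3 : ℕ) = 2 + 1 from rfl, iteratedDeriv_succ,
      show (2 : ℕ) = 1 + 1 from rfl, iteratedDeriv_succ,
      show (1 : ℕ) = 0 + 1 from rfl, iteratedDeriv_succ, iteratedDeriv_zero]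
  rw [hu3, e3]
  exact Lbound hA hn hX hw hw2 hbig

end Stmt14

open Filter Real in
/-- uniform bound for the third derivative of `h̃_{n,α}`.
Suppose `n/(w α(n)) > 1` for all large `n` and all `w ∈ (1−δ, 1+δ)`, and
`α(n)/n → 0`.  Here `x n w = x_{n,α}(w)` is the positive solution of
`∑_{j=1}^{α(n)} x^j = n/w` and
`h̃ n w = w ∑_{j=1}^{α(n)} x(w)^j/j − n log x(w) − (1/2) log(2πw ∑ j x(w)^j)`.
Then there are `C` and `N` such that `|h̃'''(w)| ≤ C n/α(n)` for all `n ≥ N` and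
all `w ∈ (1−δ, 1+δ)`. -/
theorem stmt_14 (α : ℕ → ℕ) (hα : ∀ n, 1 ≤ α n)
    (δ : ℝ) (hδ0 : 0 < δ) (hδ1 : δ < 1)
    (hbig : ∀ᶠ n : ℕ in atTop, ∀ w ∈ Set.Ioo (1 - δ) (1 + δ),
      1 < (n : ℝ) / (w * α n))
    (hαn : Tendsto (fun n : ℕ => (α n : ℝ) / n) atTop (nhds 0))
    (x : ℕ → ℝ → ℝ)
    (hx : ∀ n, 1 ≤ n → ∀ w : ℝ, 0 < w →
      0 < x n w ∧ ∑ j ∈ Finset.Icc 1 (α n), x n w ^ j = (n : ℝ) / w)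
    (h : ℕ → ℝ → ℝ)
    (hh : ∀ n, ∀ w : ℝ, 0 < w →
      h n w = w * ∑ j ∈ Finset.Icc 1 (α n), x n w ^ j / j - (n : ℝ) * Real.log (x n w)
        - 1 / 2 * Real.log (2 * π * w * ∑ j ∈ Finset.Icc 1 (α n), (j : ℝ) * x n w ^ j)) :
    ∃ C : ℝ, ∃ N : ℕ, ∀ n ≥ N, ∀ w ∈ Set.Ioo (1 - δ) (1 + δ),
      |iteratedDeriv 3 (h n) w| ≤ C * n / α n := by
  obtain ⟨N₀, hN₀⟩ := Filter.eventually_atTop.mp hbig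
  refine ⟨537 / (1 - δ) ^ 4, max N₀ 1, fun n hn w hw => ?_⟩
  have hn1 : 1 ≤ n := le_trans (le_max_right N₀ 1) hn
  have hA : 1 ≤ α n := hα n
  have hδw : 0 < 1 - δ := by linarith
  have hw0 : 0 < w := lt_of_lt_of_le hδw (le_of_lt hw.1) |>.trans_le (le_refl w)
  have hw2 : w < 2 := by
    have := hw.2
    linarith
  have hbign : 1 < (n : ℝ) / (w * α n) := hN₀ n (le_trans (le_max_left N₀ 1) hn) w hw
  have hwa : 0 < w * (α n : ℝ) := by
    have : (0:ℝ) < (α n : ℝ) := by exact_mod_cast hA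
    positivity
  have hbig' : w * (α n : ℝ) < n := by
    rw [lt_div_iff₀ hwa] at hbign
    linarith
  have key := Stmt14.iter3_bound (A := α n) (n := n) (X := x n) hA hn1
    (fun u hu => hx n hn1 u hu) (fun u hu => hh n u hu) hw0 hw2 hbig'
  refine key.trans ?_
  have ha0 : (0:ℝ) < (α n : ℝ) := by exact_mod_cast hA
  have hwδ : 1 - δ < w := hw.1
  have hpow : (1 - δ) ^ 4 ≤ w ^ 4 := by
    apply pow_le_pow_left₀ hδw.le hwδ.le
  calc 537 * ((n : ℝ) / ((α n : ℝ) * w ^ 4)) = 537 * (n : ℝ) / ((α n : ℝ) * w ^ 4) := by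
        ring
    _ ≤ 537 * (n : ℝ) / ((α n : ℝ) * (1 - δ) ^ 4) := by
        gcongr <;> first | positivity | assumption
    _ = 537 / (1 - δ) ^ 4 * n / α n := by
        field_simp
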